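/- Let σ_r, σ_p, c₁, c₂, c₃, c₀, λ₁, λ₂, δΘ ≥ 0 with λ₁, λ₂ > 0, N_r, N_p > 0, and q > 0. If (σ_r c₂)/(√N_r · λ₁) > (σ_p c₃)/(√N_p · λ₂) + (δΘ c₁)/(λ₂ c₀) and c₀ > 0, then c₀(√N_r σ_r c₂ + q √N_p σ_p c₃)/(N_r λ₁ + q N_p λ₂) + q δΘ N_p c₁/(N_r λ₁ + q N_p λ₂) < c₀ √N_r σ_r c₂/(N_r λ₁). -/

import Mathlib

theorem aux_data_strictly_improves_bound
    (σr σp c₁ c₂ c₃ c₀ δΘ : ℝ) (lam₁ lam₂ Nr Np q : ℝ)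
    (hσr : 0 ≤ σr) (hσp : 0 ≤ σp) (hc₁ : 0 ≤ c₁) (hc₂ : 0 ≤ c₂) (hc₃ : 0 ≤ c₃)
    (hδΘ : 0 ≤ δΘ) (hlam₁ : 0 < lam₁) (hlam₂ : 0 < lam₂)
    (hNr : 0 < Nr) (hNp : 0 < Np) (hq : 0 < q) (hc₀ : 0 < c₀)
    (hcond : σr * c₂ / (Real.sqrt Nr * lam₁) >
      σp * c₃ / (Real.sqrt Np * lam₂) + δΘ * c₁ / (lam₂ * c₀)) :
    c₀ * (Real.sqrt Nr * σr * c₂ + q * Real.sqrt Np * σp * c₃) /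
        (Nr * lam₁ + q * Np * lam₂) +
      q * δΘ * Np * c₁ / (Nr * lam₁ + q * Np * lam₂) <
    c₀ * Real.sqrt Nr * σr * c₂ / (Nr * lam₁) := by
  set a := Real.sqrt Nr with ha'
  set b := Real.sqrt Np with hb'
  have ha : 0 < a := Real.sqrt_pos.mpr hNr
  have hb : 0 < b := Real.sqrt_pos.mpr hNp
  have ha2 : a * a = Nr := Real.mul_self_sqrt hNr.le
  have hb2 : b * b = Np := Real.mul_self_sqrt hNp.le
  rw [gt_iff_lt, div_add_div _ _ (by positivity) (by positivity),
    div_lt_div_iff₀ (by positivity) (by positivity)] at hcond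
  have hd1 : 0 < Nr * lam₁ + q * Np * lam₂ := by positivity
  have hd2 : 0 < Nr * lam₁ := by positivity
  rw [← add_div, div_lt_div_iff₀ hd1 hd2]
  rw [← ha2, ← hb2] at *
  nlinarith [mul_lt_mul_of_pos_left hcond (show (0:ℝ) < q * a * b from by positivity)]
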